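/- Let P = con(C) ⊆ ℝⁿ with C a finite set of equalities, non-strict and strict linear inequalities, and suppose P ≠ ∅. Then cl(P) = con(C'), where C' replaces every strict inequality aᵀx > b in C by aᵀx ≥ b. -/
import Mathlib


/-- Kinds of linear constraints. -/
inductive CKind | eq | ge | gt
deriving DecidableEq

/-- Satisfaction of a linear constraint `(a, b, k)`. -/
def SatC {n : ℕ} (p : Fin n → ℝ) (c : (Fin n → ℝ) × ℝ × CKind) : Prop :=
  match c.2.2 with
  | .eq => (∑ i, c.1 i * p i) = c.2.1
  | .ge => (∑ i, c.1 i * p i) ≥ c.2.1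
  | .gt => (∑ i, c.1 i * p i) > c.2.1

/-- Satisfaction of the relaxation of a constraint, where a strict inequality
is replaced by the corresponding non-strict one. -/
def SatRelaxC {n : ℕ} (p : Fin n → ℝ) (c : (Fin n → ℝ) × ℝ × CKind) : Prop :=
  match c.2.2 with
  | .eq => (∑ i, c.1 i * p i) = c.2.1
  | .ge => (∑ i, c.1 i * p i) ≥ c.2.1
  | .gt => (∑ i, c.1 i * p i) ≥ c.2.1

theorem closure_eq_relaxed {n : ℕ} (C : Finset ((Fin n → ℝ) × ℝ × CKind))
    (hne : {p : Fin n → ℝ | ∀ c ∈ C, SatC p c}.Nonempty) :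
    closure {p : Fin n → ℝ | ∀ c ∈ C, SatC p c} =
      {p : Fin n → ℝ | ∀ c ∈ C, SatRelaxC p c} := by
  have hcontf : ∀ a : Fin n → ℝ, Continuous fun x : Fin n → ℝ => ∑ i, a i * x i := by
    intro a
    exact continuous_finset_sum _ fun i _ => (continuous_const.mul (continuous_apply i))
  apply le_antisymm
  · -- closure ⊆ relaxed
    apply closure_minimal
    · intro p hp c hc
      have := hp c hc
      unfold SatC SatRelaxC at *
      rcases c with ⟨a, b, k⟩
      cases k <;> simp_all <;> linarith
    · have : {p : Fin n → ℝ | ∀ c ∈ C, SatRelaxC p c} =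
        ⋂ c ∈ C, {p : Fin n → ℝ | SatRelaxC p c} := by
        ext p; simp [Set.mem_iInter]
      rw [this]
      apply isClosed_biInter
      intro c _
      rcases c with ⟨a, b, k⟩
      cases k
      · exact isClosed_eq (hcontf a) continuous_const
      · exact isClosed_le continuous_const (hcontf a)
      · exact isClosed_le continuous_const (hcontf a)
  · -- relaxed ⊆ closure
    intro q hq
    obtain ⟨p, hp⟩ := hne
    set u : ℝ → (Fin n → ℝ) := fun t i => (1 - t) * q i + t * p i with hu
    have hlin : ∀ (a : Fin n → ℝ) (t : ℝ),
        (∑ i, a i * u t i) = (1 - t) * (∑ i, a i * q i) + t * (∑ i, a i * p i) := by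
      intro a t
      rw [Finset.mul_sum, Finset.mul_sum, ← Finset.sum_add_distrib]
      exact Finset.sum_congr rfl fun i _ => by simp [hu]; ring
    have hcont : Continuous u := by
      apply continuous_pi
      intro i
      fun_prop
    have htend : Filter.Tendsto u (nhdsWithin 0 (Set.Ioc (0:ℝ) 1)) (nhds q) := by
      have h0 : u 0 = q := by funext i; simp [hu]
      have := (hcont.tendsto 0).mono_left (nhdsWithin_le_nhds (s := Set.Ioc (0:ℝ) 1))
      rwa [h0] at this
    haveI : (nhdsWithin (0:ℝ) (Set.Ioc 0 1)).NeBot := by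
      rw [nhdsWithin_Ioc_eq_nhdsGT (by norm_num : (0:ℝ) < 1)]
      infer_instance
    refine mem_closure_of_tendsto htend ?_
    filter_upwards [self_mem_nhdsWithin] with t ht
    intro c hc
    have hqc := hq c hc
    have hpc := hp c hc
    obtain ⟨ht0, ht1⟩ := ht
    rcases c with ⟨a, b, k⟩
    unfold SatC SatRelaxC at *
    cases k <;> simp only at hqc hpc ⊢ <;> rw [hlin a t]
    · nlinarith
    · nlinarith
    · nlinarith
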